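/- (High-voltage solution for ZIP loads) Assume the hypotheses of the ZI-load theorem: −(B_red + [b_shunt]) is positive definite with nonpositive off-diagonal entries and I_shunt > B_red E_L* componentwise, and let E_L^{ZI} := (B_red + [b_shunt])^{−1}(B_red E_L* − I_shunt) ∈ ℝ^n_{>0}. Define the short-circuit capacity matrix Q_sc := [E_L^{ZI}](B_red + [b_shunt])[E_L^{ZI}], which is invertible. Then there exist open neighborhoods U, V ⊆ ℝ^n of the origin, a continuously differentiable map H: U → V with H(0) = 0, and a constant C > 0, such that for every Q_L ∈ ℝ^n with q := Q_sc^{−1}Q_L ∈ U: the vector E_L^{ZIP} := [E_L^{ZI}](1_n − q + H(q)) has strictly positive entries and solves the reduced power flow equation with ZIP loads, 0 = [E_L][b_shunt]E_L + [E_L]I_shunt + Q_L + [E_L]B_red(E_L − E_L*) at E_L = E_L^{ZIP}; it is the unique solution of this equation of the form [E_L^{ZI}](1_n − q + ε) with ε ∈ V; and ‖H(q)‖ ≤ C‖q‖². -/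

import Mathlib

open Matrix

lemma zmatrix_mulVec_pos {n : ℕ} (A : Matrix (Fin n) (Fin n) ℝ) (hA : A.PosDef)
    (hZ : ∀ i j, i ≠ j → A i j ≤ 0) (x : Fin n → ℝ)
    (hy : ∀ i, 0 < (A.mulVec x) i) : ∀ i, 0 < x i := by
  have hx0 : ∀ i, 0 ≤ x i := by
    by_contra hcon
    push_neg at hcon
    set z : Fin n → ℝ := fun i => max (-x i) 0 with hzdef
    set p : Fin n → ℝ := fun i => max (x i) 0 with hpdef
    have hznn : ∀ i, 0 ≤ z i := fun i => le_max_right _ _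
    have hpnn : ∀ i, 0 ≤ p i := fun i => le_max_right _ _
    have hzp : ∀ i, z i * p i = 0 := by
      intro i
      rcases le_total (x i) 0 with h | h
      · have : p i = 0 := max_eq_right h
        rw [this, mul_zero]
      · have : z i = 0 := max_eq_right (by linarith)
        rw [this, zero_mul]
    have hzne : z ≠ 0 := by
      obtain ⟨i, hi⟩ := hcon
      intro h
      have h2 := congrFun h i
      have : z i = -x i := max_eq_left (by linarith)
      rw [this] at h2
      simp at h2
      linarith
    have hxpz : x = p - z := by
      funext i
      rcases le_total (x i) 0 with h | h
      · have h1 : p i = 0 := max_eq_right h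
        have h2 : z i = -x i := max_eq_left (by linarith)
        simp [h1, h2]
      · have h1 : p i = x i := max_eq_left h
        have h2 : z i = 0 := max_eq_right (by linarith)
        simp [h1, h2]
    have h1 : 0 ≤ z ⬝ᵥ A.mulVec x := by
      rw [dotProduct]
      exact Finset.sum_nonneg fun i _ => mul_nonneg (hznn i) (hy i).le
    have h2 : z ⬝ᵥ A.mulVec p ≤ 0 := by
      rw [dotProduct]
      apply Finset.sum_nonpos
      intro i _
      rw [Matrix.mulVec, dotProduct, Finset.mul_sum]
      apply Finset.sum_nonpos
      intro j _
      rcases eq_or_ne i j with rfl | hne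
      · have : z i * (A i i * p i) = A i i * (z i * p i) := by ring
        rw [this, hzp i, mul_zero]
      · have hAij := hZ i j hne
        nlinarith [mul_nonneg (hznn i) (hpnn j)]
    have h3 : 0 < z ⬝ᵥ A.mulVec z := by
      have := hA.dotProduct_mulVec_pos hzne
      simpa using this
    have h4 : z ⬝ᵥ A.mulVec x = z ⬝ᵥ A.mulVec p - z ⬝ᵥ A.mulVec z := by
      rw [hxpz, Matrix.mulVec_sub, dotProduct_sub]
    linarith
  intro i
  rcases (hx0 i).lt_or_eq with h | h
  · exact h
  · exfalso
    have hyi := hy i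
    have hle : A.mulVec x i ≤ 0 := by
      rw [Matrix.mulVec, dotProduct]
      apply Finset.sum_nonpos
      intro j _
      rcases eq_or_ne j i with rfl | hne
      · rw [← h]; simp
      · exact mul_nonpos_of_nonpos_of_nonneg (hZ i j hne.symm) (hx0 j)
    linarith

set_option maxHeartbeats 1000000 in

lemma key_ift {n : ℕ} (Q : Matrix (Fin n) (Fin n) ℝ) (hdet : IsUnit Q.det) :
    ∃ U V : Set (Fin n → ℝ), IsOpen U ∧ IsOpen V ∧ (0 : Fin n → ℝ) ∈ U ∧ (0 : Fin n → ℝ) ∈ V ∧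
    ∃ H : (Fin n → ℝ) → (Fin n → ℝ), ContDiffOn ℝ 1 H U ∧ Set.MapsTo H U V ∧ H 0 = 0 ∧
    ∃ C : ℝ, 0 < C ∧
      ∀ q ∈ U,
        (‖q‖ < 1/4 ∧ ‖H q‖ < 1/4) ∧
        ((0 : Fin n → ℝ) = Q.mulVec (H q) + (H q - q) * Q.mulVec (H q - q)) ∧
        (∀ ε ∈ V, ((0 : Fin n → ℝ) = Q.mulVec ε + (ε - q) * Q.mulVec (ε - q)) → ε = H q) ∧
        ‖H q‖ ≤ C * ‖q‖ ^ 2 := by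
  classical
  haveI : Invertible Q := Q.invertibleOfIsUnitDet hdet
  set Vn := (Fin n → ℝ)
  set V2 := ((Fin n → ℝ) × (Fin n → ℝ))
  let Lq : Vn →L[ℝ] Vn := LinearMap.toContinuousLinearMap (Matrix.mulVecLin Q)
  let Li : Vn →L[ℝ] Vn := LinearMap.toContinuousLinearMap (Matrix.mulVecLin Q⁻¹)
  have hLq : ∀ v, Lq v = Q.mulVec v := fun v => rfl
  have hLi : ∀ v, Li v = Q⁻¹.mulVec v := fun v => rfl
  let F : V2 → Vn := fun p => Q.mulVec p.2 + (p.2 - p.1) * Q.mulVec (p.2 - p.1)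
  let G : V2 → V2 := fun p => (p.1, F p)
  -- smoothness
  have hFeq : F = fun p : V2 => Lq p.2 + (p.2 - p.1) * Lq (p.2 - p.1) := rfl
  have hsub : ContDiff ℝ 1 (fun p : V2 => p.2 - p.1) := contDiff_snd.sub contDiff_fst
  have hFcd : ContDiff ℝ 1 F := by
    rw [hFeq]
    exact (Lq.contDiff.comp contDiff_snd).add (hsub.mul (Lq.contDiff.comp hsub))
  have hGcd : ContDiff ℝ 1 G := contDiff_fst.prodMk hFcd
  -- derivative
  let eQ : Vn ≃L[ℝ] Vn := (Q.toLinearEquiv' ‹Invertible Q›).toContinuousLinearEquiv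
  have heQ : ∀ v, eQ v = Q.mulVec v := fun v => rfl
  let e2 : V2 ≃L[ℝ] V2 := (ContinuousLinearEquiv.refl ℝ Vn).prodCongr eQ
  have hquad : HasStrictFDerivAt (fun p : V2 => (p.2 - p.1) * Q.mulVec (p.2 - p.1))
      (0 : V2 →L[ℝ] Vn) 0 := by
    have hs : HasStrictFDerivAt (fun p : V2 => p.2 - p.1)
        (ContinuousLinearMap.snd ℝ Vn Vn - ContinuousLinearMap.fst ℝ Vn Vn) 0 :=
      (ContinuousLinearMap.snd ℝ Vn Vn - ContinuousLinearMap.fst ℝ Vn Vn).hasStrictFDerivAt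
    have hg : HasStrictFDerivAt (fun p : V2 => Q.mulVec (p.2 - p.1))
        (Lq.comp (ContinuousLinearMap.snd ℝ Vn Vn - ContinuousLinearMap.fst ℝ Vn Vn)) 0 :=
      (Lq.hasStrictFDerivAt).comp (0 : V2) hs
    have h := hs.mul' hg
    have hzero : ((0:V2).2 - (0:V2).1) • Lq.comp (ContinuousLinearMap.snd ℝ Vn Vn - ContinuousLinearMap.fst ℝ Vn Vn) +
        MulOpposite.op (Q *ᵥ ((0:V2).2 - (0:V2).1)) •
          (ContinuousLinearMap.snd ℝ Vn Vn - ContinuousLinearMap.fst ℝ Vn Vn) = (0 : V2 →L[ℝ] Vn) := by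
      refine ContinuousLinearMap.ext fun v => ?_
      simp [ContinuousLinearMap.smulRight_apply]
    rwa [hzero] at h
  have hF' : HasStrictFDerivAt F (Lq.comp (ContinuousLinearMap.snd ℝ Vn Vn)) 0 := by
    have h1 : HasStrictFDerivAt (fun p : V2 => Q.mulVec p.2)
        (Lq.comp (ContinuousLinearMap.snd ℝ Vn Vn)) 0 :=
      (Lq.comp (ContinuousLinearMap.snd ℝ Vn Vn)).hasStrictFDerivAt
    have h2 := h1.add hquad
    rwa [add_zero] at h2
  have hG' : HasStrictFDerivAt G (e2 : V2 →L[ℝ] V2) 0 := by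
    have h1 : HasStrictFDerivAt (fun p : V2 => p.1) (ContinuousLinearMap.fst ℝ Vn Vn) 0 :=
      (ContinuousLinearMap.fst ℝ Vn Vn).hasStrictFDerivAt
    have h2 := h1.prodMk hF'
    have he : (e2 : V2 →L[ℝ] V2) =
        (ContinuousLinearMap.fst ℝ Vn Vn).prod (Lq.comp (ContinuousLinearMap.snd ℝ Vn Vn)) := by
      exact ContinuousLinearMap.ext fun v => rfl
    rw [he]
    exact h2
  -- inverse function theorem
  have hGc : ContDiffAt ℝ 1 G 0 := hGcd.contDiffAt
  have hGfd : HasFDerivAt G (e2 : V2 →L[ℝ] V2) 0 := hG'.hasFDerivAt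
  set Φ := hGc.toOpenPartialHomeomorph G hGfd one_ne_zero with hΦdef
  set ψ := hGc.localInverse hGfd one_ne_zero with hψdef
  have hψΦ : ψ = Φ.symm := rfl
  have hΦG : (Φ : V2 → V2) = G := rfl
  have hG0 : G 0 = 0 := by
    have hF0 : F 0 = 0 := by
      show Q.mulVec (0:V2).2 + ((0:V2).2 - (0:V2).1) * Q.mulVec ((0:V2).2 - (0:V2).1) = 0
      simp
    show ((0:V2).1, F 0) = 0
    rw [hF0]
    rfl
  have hψ0 : ψ 0 = 0 := by
    have h := hGc.localInverse_apply_image hGfd one_ne_zero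
    rwa [hG0] at h
  have hψcd : ContDiffAt ℝ 1 ψ 0 := by
    have h := hGc.to_localInverse hGfd one_ne_zero
    rwa [hG0] at h
  obtain ⟨W, hWn, hWcd⟩ := hψcd.contDiffOn le_rfl (by simp)
  have hS0 : (0:V2) ∈ Φ.source := hGc.mem_toOpenPartialHomeomorph_source hGfd one_ne_zero
  have hT0 : (0:V2) ∈ Φ.target := by
    have h := hGc.image_mem_toOpenPartialHomeomorph_target hGfd one_ne_zero
    rwa [hG0] at h
  obtain ⟨r, hr0, hrS⟩ := Metric.isOpen_iff.1 Φ.open_source 0 hS0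
  -- constants
  obtain ⟨K, hKdef⟩ : ∃ K : ℝ, K = ‖Li‖ * ‖Lq‖ + 1 := ⟨_, rfl⟩
  have hK1 : 1 ≤ K := by rw [hKdef]; exact le_add_of_nonneg_left (mul_nonneg (norm_nonneg _) (norm_nonneg _))
  have hK0 : 0 < K := lt_of_lt_of_le one_pos hK1
  obtain ⟨δ, hδdef⟩ : ∃ d : ℝ, d = min r (min (1/4) (1/(4*K))) := ⟨_, rfl⟩
  have hδ0 : 0 < δ := by rw [hδdef]; exact lt_min hr0 (lt_min (by norm_num) (by positivity))
  have hδr : δ ≤ r := by rw [hδdef]; exact min_le_left _ _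
  have hδ4 : δ ≤ 1/4 := by rw [hδdef]; exact le_trans (min_le_right _ _) (min_le_left _ _)
  have hδK : δ ≤ 1/(4*K) := by rw [hδdef]; exact le_trans (min_le_right _ _) (min_le_right _ _)
  have hKδ : K * δ ≤ 1/4 := by
    have h := mul_le_mul_of_nonneg_left hδK hK0.le
    have h2 : K * (1/(4*K)) = 1/4 := by
      field_simp
    linarith
  -- the open set O on the target side
  have hψc : ContinuousOn ψ (interior W) := (hWcd.mono interior_subset).continuousOn
  set O : Set V2 := ((interior W ∩ ψ ⁻¹' (Metric.ball (0:V2) δ)) ∩ Φ.target) ∩ Metric.ball (0:V2) δ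
    with hOdef
  have hOopen : IsOpen O :=
    (((hψc.isOpen_inter_preimage isOpen_interior Metric.isOpen_ball).inter
      Φ.open_target).inter Metric.isOpen_ball)
  have hO0 : (0:V2) ∈ O := by
    refine ⟨⟨⟨?_, ?_⟩, hT0⟩, ?_⟩
    · exact mem_interior_iff_mem_nhds.2 hWn
    · simp [hψ0, Metric.mem_ball, hδ0]
    · simp [Metric.mem_ball, hδ0]
  -- sets U and V
  let ι : Vn →L[ℝ] V2 := ContinuousLinearMap.inl ℝ Vn Vn
  refine ⟨(fun q : Vn => ((q, 0) : V2)) ⁻¹' O, Metric.ball (0:Vn) δ,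
    hOopen.preimage (by fun_prop), Metric.isOpen_ball, hO0, by simp [Metric.mem_ball, hδ0],
    fun q => (ψ (q, 0)).2, ?_, ?_, ?_, 4*K, by positivity, ?_⟩
  · -- ContDiffOn
    have h1 : ContDiffOn ℝ 1 (fun q : Vn => ψ (q, 0)) ((fun q : Vn => ((q, 0) : V2)) ⁻¹' O) := by
      refine ContDiffOn.comp (hWcd.mono interior_subset) ?_ ?_
      · exact (ι.contDiff.contDiffOn : ContDiffOn ℝ 1 (fun q : Vn => ((q, 0) : V2)) _)
      · intro q hq
        exact hq.1.1.1
    exact contDiff_snd.comp_contDiffOn h1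
  · -- MapsTo
    intro q hq
    have h1 : ψ (q, 0) ∈ Metric.ball (0:V2) δ := hq.1.1.2
    rw [Metric.mem_ball, dist_zero_right] at h1 ⊢
    exact lt_of_le_of_lt (norm_snd_le _) h1
  · -- H 0 = 0
    show (ψ ((0:Vn), (0:Vn))).2 = 0
    have : ((0:Vn), (0:Vn)) = (0:V2) := rfl
    rw [this, hψ0]
    rfl
  · -- main statement
    intro q hq
    have hqW : ((q, 0) : V2) ∈ interior W := hq.1.1.1
    have hqb : ψ (q, 0) ∈ Metric.ball (0:V2) δ := hq.1.1.2
    have hqT : ((q, 0) : V2) ∈ Φ.target := hq.1.2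
    have hqb2 : ((q, 0) : V2) ∈ Metric.ball (0:V2) δ := hq.2
    set p : V2 := ψ (q, 0) with hpdef
    have hpS : p ∈ Φ.source := by rw [hpdef, hψΦ]; exact Φ.map_target hqT
    have hGp : G p = (q, 0) := by
      have := Φ.right_inv hqT
      rw [hψΦ] at hpdef
      rw [hpdef]
      exact this
    have hp1 : p.1 = q := congrArg Prod.fst hGp
    have hFp : F p = 0 := congrArg Prod.snd hGp
    set Hq : Vn := (ψ (q, 0)).2 with hHqdef
    have hkey : (0:Vn) = Q.mulVec Hq + (Hq - q) * Q.mulVec (Hq - q) := by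
      have h2 : F p = Q.mulVec p.2 + (p.2 - p.1) * Q.mulVec (p.2 - p.1) := rfl
      rw [hFp, hp1] at h2
      exact h2
    have hqn : ‖q‖ < δ := by
      rw [Metric.mem_ball, dist_zero_right] at hqb2
      exact lt_of_le_of_lt (norm_fst_le ((q, (0:Vn)) : V2)) hqb2
    have hHn : ‖Hq‖ < δ := by
      rw [Metric.mem_ball, dist_zero_right] at hqb
      exact lt_of_le_of_lt (norm_snd_le _) hqb
    have hδquarter : δ ≤ 1/4 := hδ4
    refine ⟨⟨lt_of_lt_of_le hqn hδ4, lt_of_lt_of_le hHn hδ4⟩, hkey, ?_, ?_⟩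
    · -- uniqueness
      intro ε hε hεeq
      have hεn : ‖ε‖ < δ := by rwa [Metric.mem_ball, dist_zero_right] at hε
      have hqε : ((q, ε) : V2) ∈ Φ.source := by
        apply hrS
        rw [Metric.mem_ball, dist_zero_right]
        calc ‖((q, ε) : V2)‖ = max ‖q‖ ‖ε‖ := rfl
          _ < δ := max_lt hqn hεn
          _ ≤ r := hδr
      have hGqε : G (q, ε) = (q, 0) := by
        show ((q, ε).1, F (q, ε)) = (q, 0)
        have : F (q, ε) = 0 := by
          have h2 : F (q, ε) = Q.mulVec ε + (ε - q) * Q.mulVec (ε - q) := rfl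
          rw [h2, ← hεeq]
        rw [this]
      have := Φ.injOn hqε hpS (by rw [hΦG, hGqε, hGp])
      have h3 := congrArg Prod.snd this
      exact h3
    · -- quadratic bound
      have hQQi : Q⁻¹.mulVec (Q.mulVec Hq) = Hq := by
        rw [Matrix.mulVec_mulVec, Matrix.nonsing_inv_mul Q hdet, Matrix.one_mulVec]
      have hHq_eq : Hq = Li (-((Hq - q) * Q.mulVec (Hq - q))) := by
        rw [hLi]
        have : Q.mulVec Hq = -((Hq - q) * Q.mulVec (Hq - q)) := by
          have := hkey
          linear_combination (norm := module) -this
        rw [← this, hQQi]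
      have hb1 : ‖Hq‖ ≤ ‖Li‖ * (‖Hq - q‖ * (‖Lq‖ * ‖Hq - q‖)) := by
        conv_lhs => rw [hHq_eq]
        calc ‖Li (-((Hq - q) * Q.mulVec (Hq - q)))‖
            ≤ ‖Li‖ * ‖-((Hq - q) * Q.mulVec (Hq - q))‖ := Li.le_opNorm _
          _ = ‖Li‖ * ‖(Hq - q) * Q.mulVec (Hq - q)‖ := by rw [norm_neg]
          _ ≤ ‖Li‖ * (‖Hq - q‖ * ‖Q.mulVec (Hq - q)‖) := by
              exact mul_le_mul_of_nonneg_left (norm_mul_le _ _) (norm_nonneg _)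
          _ ≤ ‖Li‖ * (‖Hq - q‖ * (‖Lq‖ * ‖Hq - q‖)) := by
              refine mul_le_mul_of_nonneg_left ?_ (norm_nonneg _)
              refine mul_le_mul_of_nonneg_left ?_ (norm_nonneg _)
              rw [← hLq]
              exact Lq.le_opNorm _
      have hsubn : ‖Hq - q‖ ≤ ‖Hq‖ + ‖q‖ := norm_sub_le _ _
      have hb2 : ‖Hq‖ ≤ K * (‖Hq‖ + ‖q‖)^2 := by
        have h1 : ‖Li‖ * (‖Hq - q‖ * (‖Lq‖ * ‖Hq - q‖)) = (‖Li‖ * ‖Lq‖) * ‖Hq - q‖^2 := by ring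
        have h2 : ‖Hq - q‖^2 ≤ (‖Hq‖ + ‖q‖)^2 := by
          refine pow_le_pow_left₀ (norm_nonneg _) hsubn 2
        nlinarith [norm_nonneg (Hq - q), norm_nonneg Hq, norm_nonneg q,
          mul_nonneg (norm_nonneg Li) (norm_nonneg Lq), sq_nonneg (‖Hq‖ + ‖q‖)]
      have ha0 : (0:ℝ) ≤ ‖Hq‖ := norm_nonneg _
      have hb0 : (0:ℝ) ≤ ‖q‖ := norm_nonneg _
      have haa : ‖Hq‖ * ‖Hq‖ ≤ δ * ‖Hq‖ := mul_le_mul_of_nonneg_right hHn.le ha0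
      have h3 : ‖Hq‖ ≤ 2*K*(‖Hq‖*‖Hq‖) + 2*K*(‖q‖*‖q‖) := by
        nlinarith [mul_nonneg hK0.le (sq_nonneg (‖Hq‖ - ‖q‖)), hb2]
      have h4 : 2*K*(‖Hq‖*‖Hq‖) ≤ 2*(K*δ)*‖Hq‖ := by nlinarith [hK0.le, haa]
      have h5 : 2*(K*δ)*‖Hq‖ ≤ (1/2)*‖Hq‖ := by nlinarith [hKδ, ha0]
      have h6 : ‖Hq‖ ≤ (1/2)*‖Hq‖ + 2*K*(‖q‖*‖q‖) :=
        le_trans h3 (add_le_add_left (le_trans h4 h5) _)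
      have hgoal : ‖Hq‖ ≤ 4 * K * (‖q‖ * ‖q‖) := by linarith only [h6]
      rw [pow_two]
      exact hgoal

/-- High-voltage solution for ZIP loads. -/
theorem ZIP_high_voltage_solution {n : ℕ} (hn : 0 < n)
    (Bred : Matrix (Fin n) (Fin n) ℝ) (hsym : Bred.IsSymm)
    (ELstar bshunt Ishunt : Fin n → ℝ)
    (hM1 : (-(Bred + Matrix.diagonal bshunt)).PosDef)
    (hM2 : ∀ i j, i ≠ j → (-(Bred + Matrix.diagonal bshunt)) i j ≤ 0)
    (hI : ∀ i, (Bred.mulVec ELstar) i < Ishunt i) :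
    let ELZI := (Bred + Matrix.diagonal bshunt)⁻¹.mulVec (Bred.mulVec ELstar - Ishunt)
    let Qsc := Matrix.diagonal ELZI * (Bred + Matrix.diagonal bshunt) *
      Matrix.diagonal ELZI
    -- the ZIP reduced power flow equation, as a predicate in the constant-power
    -- vector Q_L and the load voltage vector E
    let zipEq : (Fin n → ℝ) → (Fin n → ℝ) → Prop := fun QL E =>
      (0 : Fin n → ℝ) =
        (Matrix.diagonal E).mulVec ((Matrix.diagonal bshunt).mulVec E) +
        (Matrix.diagonal E).mulVec Ishunt + QL +
        (Matrix.diagonal E).mulVec (Bred.mulVec (E - ELstar))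
    IsUnit Qsc.det ∧
    ∃ U V : Set (Fin n → ℝ), IsOpen U ∧ IsOpen V ∧
      (0 : Fin n → ℝ) ∈ U ∧ (0 : Fin n → ℝ) ∈ V ∧
      ∃ H : (Fin n → ℝ) → (Fin n → ℝ), ContDiffOn ℝ 1 H U ∧ Set.MapsTo H U V ∧
        H 0 = 0 ∧
        ∃ C : ℝ, 0 < C ∧
          ∀ QL : Fin n → ℝ, Qsc⁻¹.mulVec QL ∈ U →
            (∀ i, 0 < ELZI i * (1 - Qsc⁻¹.mulVec QL i + H (Qsc⁻¹.mulVec QL) i)) ∧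
            zipEq QL (fun i =>
              ELZI i * (1 - Qsc⁻¹.mulVec QL i + H (Qsc⁻¹.mulVec QL) i)) ∧
            (∀ ε ∈ V, zipEq QL (fun i => ELZI i * (1 - Qsc⁻¹.mulVec QL i + ε i)) →
              ε = H (Qsc⁻¹.mulVec QL)) ∧
            ‖H (Qsc⁻¹.mulVec QL)‖ ≤ C * ‖Qsc⁻¹.mulVec QL‖ ^ 2 := by
  intro ELZI Qsc zipEq
  set M := Bred + Matrix.diagonal bshunt with hMdef
  have hMdet : IsUnit M.det := by
    have h1 : (0:ℝ) < (-M).det := hM1.det_pos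
    rw [Matrix.det_neg] at h1
    rw [isUnit_iff_ne_zero]
    intro h
    rw [h, mul_zero] at h1
    exact lt_irrefl 0 h1
  have hMZI : M.mulVec ELZI = Bred.mulVec ELstar - Ishunt := by
    show M.mulVec (M⁻¹.mulVec _) = _
    rw [Matrix.mulVec_mulVec, Matrix.mul_nonsing_inv M hMdet, Matrix.one_mulVec]
  have hELZIpos : ∀ i, 0 < ELZI i := by
    apply zmatrix_mulVec_pos (-M) hM1 hM2
    intro i
    rw [Matrix.neg_mulVec, hMZI]
    simp only [Pi.neg_apply, Pi.sub_apply]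
    have := hI i
    linarith
  have hQdet : IsUnit Qsc.det := by
    show IsUnit (Matrix.diagonal ELZI * M * Matrix.diagonal ELZI).det
    rw [Matrix.det_mul, Matrix.det_mul, Matrix.det_diagonal]
    have hprod : (0:ℝ) < ∏ i, ELZI i := Finset.prod_pos (fun i _ => hELZIpos i)
    rw [isUnit_iff_ne_zero]
    exact mul_ne_zero (mul_ne_zero hprod.ne' (isUnit_iff_ne_zero.1 hMdet)) hprod.ne'
  obtain ⟨U, V, hUo, hVo, hU0, hV0, H, hHcd, hHmaps, hH0, C, hC0, hmain⟩ := key_ift Qsc hQdet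
  refine ⟨hQdet, U, V, hUo, hVo, hU0, hV0, H, hHcd, hHmaps, hH0, C, hC0, ?_⟩
  intro QL hQLU
  set q := Qsc⁻¹.mulVec QL with hqdef
  obtain ⟨⟨hqs, hHs⟩, hkey, huniq, hbound⟩ := hmain q hQLU
  have hQLq : Qsc.mulVec q = QL := by
    rw [hqdef, Matrix.mulVec_mulVec, Matrix.mul_nonsing_inv Qsc hQdet, Matrix.one_mulVec]
  -- the diagonal conjugation identity
  have hQv : ∀ v : Fin n → ℝ,
      Qsc.mulVec v = fun j => ELZI j * (M.mulVec (fun k => ELZI k * v k)) j := by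
    intro v
    show (Matrix.diagonal ELZI * M * Matrix.diagonal ELZI).mulVec v = _
    rw [← Matrix.mulVec_mulVec, ← Matrix.mulVec_mulVec]
    have hDv : ∀ u : Fin n → ℝ, (Matrix.diagonal ELZI).mulVec u = fun j => ELZI j * u j :=
      fun u => funext fun j => Matrix.mulVec_diagonal _ _ _
    rw [hDv v, hDv (M.mulVec fun k => ELZI k * v k)]
  -- the algebraic bridge
  have hfun : ∀ ε : Fin n → ℝ,
      (Matrix.diagonal (fun i => ELZI i * (1 - q i + ε i))).mulVec
          ((Matrix.diagonal bshunt).mulVec (fun i => ELZI i * (1 - q i + ε i))) +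
        (Matrix.diagonal (fun i => ELZI i * (1 - q i + ε i))).mulVec Ishunt + QL +
        (Matrix.diagonal (fun i => ELZI i * (1 - q i + ε i))).mulVec
          (Bred.mulVec ((fun i => ELZI i * (1 - q i + ε i)) - ELstar)) =
      Qsc.mulVec ε + (ε - q) * Qsc.mulVec (ε - q) := by
    intro ε
    funext i
    have hw : ∀ j, (fun k => ELZI k * (ε - q) k) j = ELZI j * (ε j - q j) := fun j => rfl
    have f1 : (Bred.mulVec ((fun j => ELZI j * (1 - q j + ε j)) - ELstar)) i =
        (Bred.mulVec (fun j => ELZI j * (1 - q j + ε j))) i - (Bred.mulVec ELstar) i := by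
      rw [Matrix.mulVec_sub]; rfl
    have f2 : (M.mulVec (fun j => ELZI j * (1 - q j + ε j))) i =
        (Bred.mulVec (fun j => ELZI j * (1 - q j + ε j))) i +
          bshunt i * (ELZI i * (1 - q i + ε i)) := by
      rw [hMdef, Matrix.add_mulVec]
      simp [Matrix.mulVec_diagonal]
    have hEdecomp : (fun j => ELZI j * (1 - q j + ε j)) =
        ELZI + fun j => ELZI j * (ε j - q j) := by
      funext j
      simp only [Pi.add_apply]
      ring
    have f3 : (M.mulVec (fun j => ELZI j * (1 - q j + ε j))) i =
        (M.mulVec ELZI) i + (M.mulVec (fun j => ELZI j * (ε j - q j))) i := by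
      rw [hEdecomp, Matrix.mulVec_add]; rfl
    have f4 : (M.mulVec ELZI) i = (Bred.mulVec ELstar) i - Ishunt i := by rw [hMZI]; rfl
    have f6 : (Qsc.mulVec (ε - q)) i =
        ELZI i * (M.mulVec (fun j => ELZI j * (ε j - q j))) i := by
      rw [hQv (ε - q)]
      rfl
    have f8 : (Qsc.mulVec (ε - q)) i = (Qsc.mulVec ε) i - QL i := by
      rw [Matrix.mulVec_sub, hQLq]; rfl
    simp only [Pi.add_apply, Pi.sub_apply, Pi.mul_apply, Matrix.mulVec_diagonal]
    linear_combination (ELZI i * (1 - q i + ε i)) * (f1 - f2 + f3 + f4) -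
      (1 - q i + ε i) * f6 + f8
  refine ⟨?_, ?_, ?_, hbound⟩
  · -- positivity
    intro i
    have h1 : |q i| ≤ ‖q‖ := norm_le_pi_norm q i
    have h2 : |H q i| ≤ ‖H q‖ := norm_le_pi_norm (H q) i
    have h3 := abs_le.1 h1
    have h4 := abs_le.1 h2
    have : 0 < 1 - q i + H q i := by
      cases h3; cases h4; linarith
    exact mul_pos (hELZIpos i) this
  · -- the equation holds
    show (0 : Fin n → ℝ) = _
    rw [hfun (H q)]
    exact hkey
  · -- uniqueness
    intro ε hεV heq
    have heq' : (0 : Fin n → ℝ) =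
        Qsc.mulVec ε + (ε - q) * Qsc.mulVec (ε - q) := by
      have h := heq
      rw [show (zipEq QL (fun i => ELZI i * (1 - q i + ε i))) =
        ((0 : Fin n → ℝ) =
          (Matrix.diagonal (fun i => ELZI i * (1 - q i + ε i))).mulVec
              ((Matrix.diagonal bshunt).mulVec (fun i => ELZI i * (1 - q i + ε i))) +
            (Matrix.diagonal (fun i => ELZI i * (1 - q i + ε i))).mulVec Ishunt + QL +
            (Matrix.diagonal (fun i => ELZI i * (1 - q i + ε i))).mulVec
              (Bred.mulVec ((fun i => ELZI i * (1 - q i + ε i)) - ELstar))) from rfl] at h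
      rw [hfun ε] at h
      exact h
    exact huniq ε hεV heq'
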